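/- arXiv:1701.06733 — 2 statements merged into one kernel-verified Lean document; each statement's English description precedes it below -/
import Mathlib

section
/- For an m×n block p over X and 1 ≤ k ≤ m, 1 ≤ l ≤ n, the number of primitive m×n blocks q whose k×l torus-occurrence counts all agree with those of p satisfies log₂ |T(p,k,l)| ≤ −(mn/(kl)) Σ_{w ∈ X^{k×l}} (N(w|p)/(mn)) log₂ (N(w|p)/(mn)). -/
open Finset Filter MeasureTheory

/-- Cyclic (torus) occurrence count of the `k × l` block `u` in the `m × n` block `p`:
the number of positions `(i,j)` at which `u` occurs in the flat torus of `p`. -/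
def cycCount {X : Type*} [DecidableEq X] {m n k l : ℕ} (p : Fin m → Fin n → X)
    (u : Fin k → Fin l → X) : ℕ :=
  ((Finset.univ : Finset (Fin m × Fin n)).filter (fun ij =>
    ∀ (a : Fin k) (b : Fin l),
      p ⟨((ij.1 : ℕ) + (a : ℕ)) % m, Nat.mod_lt _ (by have := ij.1.isLt; omega)⟩
        ⟨((ij.2 : ℕ) + (b : ℕ)) % n, Nat.mod_lt _ (by have := ij.2.isLt; omega)⟩ = u a b)).card

/-- Horizontal (column-wise) concatenation `s : t`. -/
def hcat {X : Type*} {k l1 l2 : ℕ} (s : Fin k → Fin l1 → X) (t : Fin k → Fin l2 → X) :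
    Fin k → Fin (l1 + l2) → X :=
  fun a b => if h : (b : ℕ) < l1 then s a ⟨b, h⟩ else t a ⟨(b : ℕ) - l1, by have := b.isLt; omega⟩

/-- Vertical (row-wise) concatenation `u / v`. -/
def vcat {X : Type*} {k1 k2 l : ℕ} (u : Fin k1 → Fin l → X) (v : Fin k2 → Fin l → X) :
    Fin (k1 + k2) → Fin l → X :=
  fun a b => if h : (a : ℕ) < k1 then u ⟨a, h⟩ b else v ⟨(a : ℕ) - k1, by have := a.isLt; omega⟩ b

/-- Cyclic shift of `p` by `ij`. -/
def cycShift {X : Type*} {m n : ℕ} (p : Fin m → Fin n → X) (ij : Fin m × Fin n) :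
    Fin m → Fin n → X :=
  fun a b => p (a + ij.1) (b + ij.2)

/-- The set `[p]` of distinct cyclic shifts of `p`. -/
def orbit {X : Type*} [DecidableEq X] {m n : ℕ} (p : Fin m → Fin n → X) :
    Finset (Fin m → Fin n → X) :=
  Finset.image (cycShift p) Finset.univ

/-- `p` is primitive if its `m * n` cyclic shifts are pairwise distinct. -/
def Primitive {X : Type*} [DecidableEq X] {m n : ℕ} (p : Fin m → Fin n → X) : Prop :=
  (orbit p).card = m * n

instance {X : Type*} [DecidableEq X] {m n : ℕ} (p : Fin m → Fin n → X) :
    Decidable (Primitive p) := inferInstanceAs (Decidable (_ = _))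

/-- The set `T(p,k,l)` of primitive `m × n` blocks whose `k × l` cyclic counts
all agree with those of `p`. -/
def TSet {X : Type*} [Fintype X] [DecidableEq X] (m n k l : ℕ) (p : Fin m → Fin n → X) :
    Finset (Fin m → Fin n → X) :=
  Finset.univ.filter (fun q =>
    Primitive q ∧ ∀ w : Fin k → Fin l → X, cycCount q w = cycCount p w)

section ShearerAux
open Function
open scoped ENNReal

variable {δ : Type*} [Fintype δ] [DecidableEq δ]
  {X : Type*} [Fintype X] [MeasurableSpace X] [MeasurableSingletonClass X]
  {J : Type*} [Fintype J] [DecidableEq J]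

variable (δ X) in
private noncomputable def cnt : ∀ _ : δ, Measure X := fun _ => Measure.count

private instance cnt_sigmaFinite (i : δ) :
    SigmaFinite (cnt δ X i) := by
  unfold cnt; infer_instance

theorem shearer_aux (W : J → Finset δ) (f : J → ((δ → X) → ℝ≥0∞))
    (hdep : ∀ j x y, (∀ i ∈ W j, x i = y i) → f j x = f j y)
    {d : ℕ} (hd : 0 < d) (hcov : ∀ i : δ, (univ.filter fun j => i ∈ W j).card = d)
    (T : Finset δ) (x : δ → X) :
    (∫⋯∫⁻_T, (fun q => ∏ j, f j q ^ ((d : ℝ)⁻¹)) ∂(cnt δ X)) x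
      ≤ ∏ j, ((∫⋯∫⁻_(T ∩ W j), f j ∂(cnt δ X)) x) ^ ((d : ℝ)⁻¹) := by
  have hmeas : ∀ g : (δ → X) → ℝ≥0∞, Measurable g := fun g => measurable_of_countable g
  haveI : ∀ i : δ, SigmaFinite ((cnt δ X) i) := fun _ => by
    unfold cnt; infer_instance
  induction T using Finset.induction generalizing x with
  | empty => simp [lmarginal_empty]
  | @insert i T hiT ih =>
    rw [lmarginal_insert _ (hmeas _) hiT]
    have key : ∀ t : X,
        (∫⋯∫⁻_T, (fun q => ∏ j, f j q ^ ((d : ℝ)⁻¹)) ∂(cnt δ X)) (update x i t)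
          ≤ ∏ j, ((∫⋯∫⁻_(T ∩ W j), f j ∂(cnt δ X)) (update x i t)) ^ ((d : ℝ)⁻¹) := fun t => ih _
    calc ∫⁻ t, (∫⋯∫⁻_T, (fun q => ∏ j, f j q ^ ((d : ℝ)⁻¹)) ∂(cnt δ X)) (update x i t) ∂Measure.count
        ≤ ∫⁻ t, ∏ j, ((∫⋯∫⁻_(T ∩ W j), f j ∂(cnt δ X)) (update x i t)) ^ ((d : ℝ)⁻¹) ∂Measure.count :=
          lintegral_mono key
      _ ≤ ∏ j, ((∫⋯∫⁻_((insert i T) ∩ W j), f j ∂(cnt δ X)) x) ^ ((d : ℝ)⁻¹) := ?_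
    -- split over whether i ∈ W j
    have hconst : ∀ j, i ∉ W j → ∀ t,
        (∫⋯∫⁻_(T ∩ W j), f j ∂(cnt δ X)) (update x i t) = (∫⋯∫⁻_(T ∩ W j), f j ∂(cnt δ X)) x := by
      intro j hij t
      unfold lmarginal
      refine lintegral_congr fun y => hdep j _ _ fun i' hi' => ?_
      by_cases h : i' ∈ T ∩ W j
      · simp [updateFinset, h]
      · have : i' ≠ i := fun h' => hij (h' ▸ hi')
        simp [updateFinset, h, update_of_ne this]
    set s : Finset J := univ.filter (fun j => i ∈ W j) with hs
    have hsplit : ∀ t, ∏ j, ((∫⋯∫⁻_(T ∩ W j), f j ∂(cnt δ X)) (update x i t)) ^ ((d : ℝ)⁻¹)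
        = (∏ j ∈ s, ((∫⋯∫⁻_(T ∩ W j), f j ∂(cnt δ X)) (update x i t)) ^ ((d : ℝ)⁻¹))
          * ∏ j ∈ sᶜ, ((∫⋯∫⁻_(T ∩ W j), f j ∂(cnt δ X)) x) ^ ((d : ℝ)⁻¹) := by
      intro t
      rw [← Finset.prod_mul_prod_compl s]
      congr 1
      refine Finset.prod_congr rfl fun j hj => ?_
      rw [hconst j (by simpa [hs] using hj) t]
    simp_rw [hsplit]
    have hmeasX : ∀ g : X → ℝ≥0∞, Measurable g := fun g => measurable_of_countable g
    rw [lintegral_mul_const _ (hmeasX _)]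
    have hcard : s.card = d := hcov i
    have holder : ∫⁻ t, ∏ j ∈ s, ((∫⋯∫⁻_(T ∩ W j), f j ∂(cnt δ X)) (update x i t)) ^ ((d : ℝ)⁻¹)
        ∂Measure.count
        ≤ ∏ j ∈ s, (∫⁻ t, (∫⋯∫⁻_(T ∩ W j), f j ∂(cnt δ X)) (update x i t) ∂Measure.count)
            ^ ((d : ℝ)⁻¹) := by
      refine ENNReal.lintegral_prod_norm_pow_le s (fun j _ => (hmeasX _).aemeasurable) ?_
        (fun j _ => by positivity)
      rw [Finset.sum_const, hcard, nsmul_eq_mul]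
      rw [mul_inv_cancel₀]
      exact_mod_cast hd.ne'
    have hins : ∀ j ∈ s, ∫⁻ t, (∫⋯∫⁻_(T ∩ W j), f j ∂(cnt δ X)) (update x i t) ∂Measure.count
        = (∫⋯∫⁻_((insert i T) ∩ W j), f j ∂(cnt δ X)) x := by
      intro j hj
      have hiW : i ∈ W j := by simpa [hs] using hj
      have hiTW : i ∉ T ∩ W j := fun h => hiT (Finset.mem_of_mem_inter_left h)
      rw [Finset.insert_inter_of_mem hiW]
      exact (lmarginal_insert (μ := cnt δ X) _ (hmeas _) hiTW x).symm
    have hnot : ∀ j ∈ sᶜ, (insert i T) ∩ W j = T ∩ W j := by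
      intro j hj
      exact Finset.insert_inter_of_notMem (by simpa [hs] using hj)
    calc (∫⁻ t, ∏ j ∈ s, ((∫⋯∫⁻_(T ∩ W j), f j ∂(cnt δ X)) (update x i t)) ^ ((d : ℝ)⁻¹)
            ∂Measure.count)
          * ∏ j ∈ sᶜ, ((∫⋯∫⁻_(T ∩ W j), f j ∂(cnt δ X)) x) ^ ((d : ℝ)⁻¹)
        ≤ (∏ j ∈ s, ((∫⋯∫⁻_((insert i T) ∩ W j), f j ∂(cnt δ X)) x) ^ ((d : ℝ)⁻¹))
          * ∏ j ∈ sᶜ, ((∫⋯∫⁻_((insert i T) ∩ W j), f j ∂(cnt δ X)) x) ^ ((d : ℝ)⁻¹) := by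
          refine mul_le_mul' ?_ ?_
          · refine le_trans holder (le_of_eq (Finset.prod_congr rfl fun j hj => ?_))
            rw [hins j hj]
          · exact le_of_eq (Finset.prod_congr rfl fun j hj => by rw [hnot j hj])
      _ = ∏ j, ((∫⋯∫⁻_((insert i T) ∩ W j), f j ∂(cnt δ X)) x) ^ ((d : ℝ)⁻¹) :=
          Finset.prod_mul_prod_compl s _


end ShearerAux

section App
variable {X : Type*} [Fintype X] [DecidableEq X] {m n k l : ℕ}

private def wpos (hkm : k ≤ m) (hln : l ≤ n) (ij : Fin m × Fin n) (ab : Fin k × Fin l) :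
    Fin m × Fin n :=
  (ij.1 + Fin.castLE hkm ab.1, ij.2 + Fin.castLE hln ab.2)

private def Wnd (hkm : k ≤ m) (hln : l ≤ n) (ij : Fin m × Fin n) : Finset (Fin m × Fin n) :=
  Finset.image (wpos hkm hln ij) Finset.univ

private lemma mk_add_eq {k m : ℕ} (hkm : k ≤ m) (i : Fin m) (a : Fin k) (h) :
    (⟨((i : ℕ) + (a : ℕ)) % m, h⟩ : Fin m) = i + Fin.castLE hkm a := by
  apply Fin.ext; simp [Fin.val_add]

private lemma cycCount_eq (hkm : k ≤ m) (hln : l ≤ n) (q : Fin m → Fin n → X)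
    (w : Fin k → Fin l → X) :
    cycCount q w = (univ.filter (fun ij : Fin m × Fin n =>
      (fun a b => q (wpos hkm hln ij (a, b)).1 (wpos hkm hln ij (a, b)).2) = w)).card := by
  unfold cycCount
  congr 1
  apply Finset.filter_congr
  intro ij _
  rw [funext_iff]
  refine forall_congr' fun a => ?_
  rw [funext_iff]
  refine forall_congr' fun b => ?_
  rw [mk_add_eq hkm ij.1 a, mk_add_eq hln ij.2 b]
  exact Iff.rfl

private lemma sum_cycCount (hkm : k ≤ m) (hln : l ≤ n) (q : Fin m → Fin n → X) :
    ∑ w : Fin k → Fin l → X, cycCount q w = m * n := by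
  simp_rw [cycCount_eq hkm hln, Finset.card_filter]
  rw [Finset.sum_comm]
  have h1 : ∀ ij : Fin m × Fin n, (∑ w : Fin k → Fin l → X,
      if (fun a b => q (wpos hkm hln ij (a, b)).1 (wpos hkm hln ij (a, b)).2) = w
      then (1 : ℕ) else 0) = 1 := by
    intro ij
    simp
  simp only [h1]
  simp [Finset.card_univ]

private lemma add_castLE_inj {k m : ℕ} (hkm : k ≤ m) (i : Fin m) {a b : Fin k}
    (h : i + Fin.castLE hkm a = i + Fin.castLE hkm b) : a = b := by
  haveI : NeZero m := ⟨(Fin.pos i).ne'⟩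
  exact Fin.castLE_injective hkm (add_left_cancel h)

private lemma wpos_inj (hkm : k ≤ m) (hln : l ≤ n) (ij : Fin m × Fin n) :
    Function.Injective (wpos hkm hln ij) := by
  rintro ⟨a, b⟩ ⟨a', b'⟩ h
  rw [Prod.ext_iff] at h
  obtain ⟨h1, h2⟩ := h
  exact Prod.ext (add_castLE_inj hkm ij.1 h1) (add_castLE_inj hln ij.2 h2)

private lemma Wnd_card (hkm : k ≤ m) (hln : l ≤ n) (ij : Fin m × Fin n) :
    (Wnd hkm hln ij).card = k * l := by
  rw [Wnd, Finset.card_image_of_injective _ (wpos_inj hkm hln ij)]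
  simp [Finset.card_univ]

private lemma cover_card (hk1 : 1 ≤ k) (hkm : k ≤ m) (hl1 : 1 ≤ l) (hln : l ≤ n)
    (st : Fin m × Fin n) :
    ((univ : Finset (Fin m × Fin n)).filter (fun ij => st ∈ Wnd hkm hln ij)).card = k * l := by
  haveI : NeZero m := ⟨by omega⟩
  haveI : NeZero n := ⟨by omega⟩
  have hset : (univ : Finset (Fin m × Fin n)).filter (fun ij => st ∈ Wnd hkm hln ij)
      = Finset.image (fun ab : Fin k × Fin l =>
          ((st.1 - Fin.castLE hkm ab.1, st.2 - Fin.castLE hln ab.2) : Fin m × Fin n)) univ := by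
    ext ij
    simp only [Finset.mem_filter, Finset.mem_univ, true_and, Finset.mem_image, Wnd, wpos]
    constructor
    · rintro ⟨ab, hab⟩
      rw [Prod.ext_iff] at hab
      refine ⟨ab, ?_⟩
      rw [Prod.ext_iff]
      exact ⟨(eq_sub_iff_add_eq.2 hab.1).symm, (eq_sub_iff_add_eq.2 hab.2).symm⟩
    · rintro ⟨ab, hab⟩
      rw [Prod.ext_iff] at hab
      refine ⟨ab, ?_⟩
      rw [Prod.ext_iff]
      constructor
      · rw [← hab.1]; exact sub_add_cancel _ _
      · rw [← hab.2]; exact sub_add_cancel _ _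
  rw [hset, Finset.card_image_of_injective, Finset.card_univ] <;> try simp
  rintro ⟨a, b⟩ ⟨a', b'⟩ h
  rw [Prod.ext_iff] at h
  obtain ⟨h1, h2⟩ := h
  simp only at h1 h2
  exact Prod.ext (Fin.castLE_injective hkm (sub_right_injective h1))
    (Fin.castLE_injective hln (sub_right_injective h2))

end App


open scoped ENNReal in
open Function in
/-- combinatorial bound
`log₂ |T(p,k,l)| ≤ −(mn/(kl)) Σ_w (N(w|p)/(mn)) log₂ (N(w|p)/(mn))`. -/
theorem log_card_TSet_le {X : Type*} [Fintype X] [DecidableEq X] {m n k l : ℕ}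
    (hk1 : 1 ≤ k) (hkm : k ≤ m) (hl1 : 1 ≤ l) (hln : l ≤ n)
    (p : Fin m → Fin n → X) (hp : Primitive p) :
    Real.logb 2 ((TSet m n k l p).card) ≤
      -(((m : ℝ) * n) / ((k : ℝ) * l)) *
        ∑ w : Fin k → Fin l → X,
          ((cycCount p w : ℝ) / ((m : ℝ) * n)) *
            Real.logb 2 ((cycCount p w : ℝ) / ((m : ℝ) * n)) := by
  
  classical
  haveI : NeZero m := ⟨by omega⟩
  haveI : NeZero n := ⟨by omega⟩
  letI : MeasurableSpace X := ⊤
  haveI : MeasurableSingletonClass X := ⟨fun _ => trivial⟩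
  haveI : Nonempty X := ⟨p ⟨0, by omega⟩ ⟨0, by omega⟩⟩
  have hd0 : 0 < k * l := Nat.mul_pos hk1 hl1
  have hMn0 : 0 < m * n := Nat.mul_pos (hk1.trans hkm) (hl1.trans hln)
  have hmnR : (0 : ℝ) < (m : ℝ) * n := by
    have h : (0 : ℝ) < ((m * n : ℕ) : ℝ) := by exact_mod_cast hMn0
    push_cast at h
    exact h
  have hklR : (0 : ℝ) < (k : ℝ) * l := by
    have h : (0 : ℝ) < ((k * l : ℕ) : ℝ) := by exact_mod_cast hd0
    push_cast at h
    exact h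
  set d : ℕ := k * l with hd
  set P : (Fin k → Fin l → X) → ℝ≥0∞ :=
    fun w => (cycCount p w : ℝ≥0∞) / ((m * n : ℕ) : ℝ≥0∞) with hPdef
  set F : (Fin m × Fin n) → ((Fin m × Fin n) → X) → ℝ≥0∞ :=
    fun ij r => P (fun a b => r (wpos hkm hln ij (a, b))) with hFdef
  have hdep : ∀ ij x y, (∀ i' ∈ Wnd hkm hln ij, x i' = y i') → F ij x = F ij y := by
    intro ij x y hxy
    simp only [hFdef]
    congr 1
    funext a b
    exact hxy _ (Finset.mem_image_of_mem _ (Finset.mem_univ (a, b)))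
  obtain ⟨x₀⟩ : Nonempty ((Fin m × Fin n) → X) := inferInstance
  have hshear := shearer_aux (Wnd hkm hln) F hdep hd0
    (fun st => cover_card hk1 hkm hl1 hln st) Finset.univ x₀
  -- the probability vector sums to 1
  have hsum1 : ∑ w : Fin k → Fin l → X, P w = 1 := by
    simp only [hPdef, div_eq_mul_inv]
    rw [← Finset.sum_mul, ← Nat.cast_sum, sum_cycCount hkm hln p, ← div_eq_mul_inv]
    exact ENNReal.div_self (by exact_mod_cast hMn0.ne') (ENNReal.natCast_ne_top _)
  -- each window marginal equals 1
  have hmarg : ∀ ij : Fin m × Fin n,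
      (∫⋯∫⁻_(Finset.univ ∩ Wnd hkm hln ij), F ij ∂(cnt (Fin m × Fin n) X)) x₀ = 1 := by
    intro ij
    rw [Finset.univ_inter]
    have hsing : ∀ y : (i' : ↥(Wnd hkm hln ij)) → X,
        (Measure.pi fun i' : ↥(Wnd hkm hln ij) => cnt (Fin m × Fin n) X ↑i') {y} = 1 := by
      intro y
      rw [← Set.univ_pi_singleton, Measure.pi_pi]
      simp [cnt, Measure.count_singleton]
    have hmem : ∀ ab : Fin k × Fin l, wpos hkm hln ij ab ∈ Wnd hkm hln ij :=
      fun ab => Finset.mem_image_of_mem _ (Finset.mem_univ ab)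
    set Φ : ((i' : ↥(Wnd hkm hln ij)) → X) → (Fin k → Fin l → X) :=
      fun y a b => y ⟨wpos hkm hln ij (a, b), hmem (a, b)⟩ with hΦdef
    have hbij : Function.Bijective Φ := by
      rw [Fintype.bijective_iff_injective_and_card]
      constructor
      · intro y₁ y₂ hΦ
        funext i'
        obtain ⟨ab, -, hab⟩ := Finset.mem_image.1 i'.2
        have hi' : i' = ⟨wpos hkm hln ij (ab.1, ab.2), hmem (ab.1, ab.2)⟩ :=
          Subtype.ext (by rw [Prod.mk.eta]; exact hab.symm)
        rw [hi']
        exact congrFun (congrFun hΦ ab.1) ab.2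
      · rw [Fintype.card_fun, Fintype.card_coe, Wnd_card hkm hln]
        rw [Fintype.card_pi]
        simp [Fintype.card_fun, ← pow_mul, mul_comm l k]
    have hFy : ∀ y, F ij (Function.updateFinset x₀ (Wnd hkm hln ij) y) = P (Φ y) := by
      intro y
      simp only [hFdef]
      congr 1
      funext a b
      simp only [Function.updateFinset, hmem (a, b), dif_pos]
      rfl
    calc (∫⋯∫⁻_(Wnd hkm hln ij), F ij ∂(cnt (Fin m × Fin n) X)) x₀
        = ∑ y : (i' : ↥(Wnd hkm hln ij)) → X,
            F ij (Function.updateFinset x₀ (Wnd hkm hln ij) y)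
              * (Measure.pi fun i' : ↥(Wnd hkm hln ij) => cnt (Fin m × Fin n) X ↑i') {y} := by
          rw [lmarginal]
          rw [MeasureTheory.lintegral_fintype]
      _ = ∑ y : (i' : ↥(Wnd hkm hln ij)) → X, P (Φ y) := by
          exact Finset.sum_congr rfl fun y _ => by rw [hsing y, mul_one, hFy y]
      _ = ∑ w : Fin k → Fin l → X, P w := Fintype.sum_bijective Φ hbij _ _ (fun y => rfl)
      _ = 1 := hsum1
  -- the common value of the product over all windows, for q ∈ TSet
  set ρ : ℝ≥0∞ := ∏ w : Fin k → Fin l → X,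
      (P w ^ ((d : ℝ)⁻¹)) ^ (cycCount p w) with hρdef
  have hprod : ∀ q ∈ TSet m n k l p,
      (∏ ij : Fin m × Fin n, F ij (fun st => q st.1 st.2) ^ ((d : ℝ)⁻¹)) = ρ := by
    intro q hq
    have hqc : ∀ w, cycCount q w = cycCount p w :=
      ((Finset.mem_filter.1 hq).2).2
    have hfib := Finset.prod_fiberwise_of_maps_to (s := (Finset.univ : Finset (Fin m × Fin n)))
      (g := fun ij : Fin m × Fin n =>
        (fun a b => q (wpos hkm hln ij (a, b)).1 (wpos hkm hln ij (a, b)).2))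
      (t := (Finset.univ : Finset (Fin k → Fin l → X)))
      (fun ij _ => Finset.mem_univ _)
      (fun ij => F ij (fun st => q st.1 st.2) ^ ((d : ℝ)⁻¹))
    rw [← hfib, hρdef]
    refine Finset.prod_congr rfl fun w _ => ?_
    have hcard : (Finset.univ.filter (fun ij : Fin m × Fin n =>
        (fun a b => q (wpos hkm hln ij (a, b)).1 (wpos hkm hln ij (a, b)).2) = w)).card
        = cycCount p w := by
      rw [← hqc w, cycCount_eq hkm hln q w]
    calc (∏ ij ∈ Finset.univ.filter (fun ij : Fin m × Fin n =>
            (fun a b => q (wpos hkm hln ij (a, b)).1 (wpos hkm hln ij (a, b)).2) = w),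
            F ij (fun st => q st.1 st.2) ^ ((d : ℝ)⁻¹))
        = ∏ _ij ∈ Finset.univ.filter (fun ij : Fin m × Fin n =>
            (fun a b => q (wpos hkm hln ij (a, b)).1 (wpos hkm hln ij (a, b)).2) = w),
            (P w) ^ ((d : ℝ)⁻¹) := by
          refine Finset.prod_congr rfl fun ij hij => ?_
          have hw : (fun a b => q (wpos hkm hln ij (a, b)).1 (wpos hkm hln ij (a, b)).2) = w :=
            (Finset.mem_filter.1 hij).2
          exact congrArg (fun z => z ^ ((d : ℝ)⁻¹)) (congrArg P hw)
      _ = (P w ^ ((d : ℝ)⁻¹)) ^ (cycCount p w) := by rw [Finset.prod_const, hcard]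
  -- lower bound for the left-hand side of Shearer's inequality
  have hcardS : ((TSet m n k l p).card : ℝ≥0∞) * ρ
      ≤ (∫⋯∫⁻_(Finset.univ), (fun q => ∏ ij : Fin m × Fin n, F ij q ^ ((d : ℝ)⁻¹))
          ∂(cnt (Fin m × Fin n) X)) x₀ := by
    have huncur : Function.Injective
        (fun (q : Fin m → Fin n → X) (st : Fin m × Fin n) => q st.1 st.2) := by
      intro q₁ q₂ h
      funext a b
      exact congrFun h (a, b)
    set S : Finset ((Fin m × Fin n) → X) :=
      (TSet m n k l p).image (fun q st => q st.1 st.2) with hSdef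
    have hSmem : ∀ r ∈ S, (∏ ij : Fin m × Fin n, F ij r ^ ((d : ℝ)⁻¹)) = ρ := by
      intro r hr
      obtain ⟨q, hq, rfl⟩ := Finset.mem_image.1 hr
      exact hprod q hq
    rw [lmarginal_univ]
    have hsing : ∀ r : (Fin m × Fin n) → X,
        (Measure.pi fun _ : Fin m × Fin n => (Measure.count : Measure X)) {r} = 1 := by
      intro r
      rw [← Set.univ_pi_singleton, Measure.pi_pi]
      simp [Measure.count_singleton]
    calc ((TSet m n k l p).card : ℝ≥0∞) * ρ
        = ∑ r ∈ S, (∏ ij : Fin m × Fin n, F ij r ^ ((d : ℝ)⁻¹))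
            * (Measure.pi fun _ : Fin m × Fin n => (Measure.count : Measure X)) {r} := by
          rw [Finset.sum_congr rfl (fun r hr => by rw [hSmem r hr, hsing r, mul_one])]
          rw [Finset.sum_const, hSdef, Finset.card_image_of_injective _ huncur]
          rw [nsmul_eq_mul]
      _ = ∫⁻ r in ↑S, (∏ ij : Fin m × Fin n, F ij r ^ ((d : ℝ)⁻¹))
            ∂(Measure.pi fun _ : Fin m × Fin n => (Measure.count : Measure X)) :=
          (MeasureTheory.lintegral_finset S _).symm
      _ ≤ ∫⁻ r, (∏ ij : Fin m × Fin n, F ij r ^ ((d : ℝ)⁻¹))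
            ∂(Measure.pi fun _ : Fin m × Fin n => (Measure.count : Measure X)) :=
          MeasureTheory.setLIntegral_le_lintegral _ _
  -- combine
  have hkey : ((TSet m n k l p).card : ℝ≥0∞) * ρ ≤ 1 := by
    refine hcardS.trans (hshear.trans ?_)
    rw [Finset.prod_congr rfl (fun ij _ => by rw [hmarg ij])]
    simp
  -- P w is finite, and positive when the count is positive
  have hPtop : ∀ w, P w ≠ ⊤ := fun w =>
    (ENNReal.div_lt_top (ENNReal.natCast_ne_top _) (by exact_mod_cast hMn0.ne')).ne
  have hPpos : ∀ w, cycCount p w ≠ 0 → P w ≠ 0 := by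
    intro w hw
    simp only [hPdef]
    rw [ENNReal.div_ne_zero]
    exact ⟨by exact_mod_cast hw, ENNReal.natCast_ne_top _⟩
  have hρtop : ρ ≠ ⊤ := by
    rw [hρdef]
    refine (ENNReal.prod_lt_top ?_).ne
    intro w _
    exact (ENNReal.pow_ne_top (ENNReal.rpow_ne_top_of_nonneg (by positivity) (hPtop w))).lt_top
  have hρ0 : ρ ≠ 0 := by
    rw [hρdef]
    rw [Finset.prod_ne_zero_iff]
    intro w _
    rcases Nat.eq_zero_or_pos (cycCount p w) with hw | hw
    · rw [hw, pow_zero]; exact one_ne_zero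
    · refine pow_ne_zero _ ?_
      have : (0 : ℝ≥0∞) < P w ^ ((d : ℝ)⁻¹) :=
        ENNReal.rpow_pos (lt_of_le_of_ne zero_le (Ne.symm (hPpos w hw.ne'))) (hPtop w)
      exact this.ne'
  -- pass to real numbers
  have hcard_le : ((TSet m n k l p).card : ℝ≥0∞) ≤ ρ⁻¹ := by
    rw [← one_div, ENNReal.le_div_iff_mul_le (Or.inl hρ0) (Or.inl hρtop)]
    exact hkey
  have hcard_le' : ((TSet m n k l p).card : ℝ) ≤ (ρ.toReal)⁻¹ := by
    have := ENNReal.toReal_mono (ENNReal.inv_ne_top.2 hρ0) hcard_le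
    rwa [ENNReal.toReal_natCast, ENNReal.toReal_inv] at this
  have hRpos : 0 < ρ.toReal := ENNReal.toReal_pos hρ0 hρtop
  have hcardpos : 0 < ((TSet m n k l p).card : ℝ) := by
    have hpmem : p ∈ TSet m n k l p :=
      Finset.mem_filter.2 ⟨Finset.mem_univ _, hp, fun w => rfl⟩
    have := Finset.card_pos.2 ⟨p, hpmem⟩
    exact_mod_cast this
  have hlogle : Real.logb 2 ((TSet m n k l p).card)
      ≤ Real.logb 2 ((ρ.toReal)⁻¹) :=
    Real.logb_le_logb_of_le (by norm_num) hcardpos hcard_le'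
  refine hlogle.trans ?_
  -- compute the logarithm of ρ.toReal
  have hRval : ρ.toReal = ∏ w : Fin k → Fin l → X,
      ((P w).toReal ^ ((d : ℝ)⁻¹)) ^ (cycCount p w) := by
    rw [hρdef, ENNReal.toReal_prod]
    refine Finset.prod_congr rfl fun w _ => ?_
    rw [ENNReal.toReal_pow, ← ENNReal.toReal_rpow]
  have hcw : ∀ w, (P w).toReal = (cycCount p w : ℝ) / ((m : ℝ) * n) := by
    intro w
    simp only [hPdef, ENNReal.toReal_div, ENNReal.toReal_natCast, Nat.cast_mul,
      ENNReal.toReal_mul]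
  have hfac_ne : ∀ w : Fin k → Fin l → X,
      ((P w).toReal ^ ((d : ℝ)⁻¹)) ^ (cycCount p w) ≠ 0 := by
    intro w
    rcases Nat.eq_zero_or_pos (cycCount p w) with hw | hw
    · rw [hw, pow_zero]; exact one_ne_zero
    · refine pow_ne_zero _ ?_
      have hcpos : 0 < (P w).toReal := by
        rw [hcw w]
        have hcc : (0 : ℝ) < (cycCount p w : ℝ) := by exact_mod_cast hw
        exact div_pos hcc hmnR
      exact (Real.rpow_pos_of_pos hcpos _).ne'
  have hlogρ : Real.logb 2 (ρ.toReal)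
      = ∑ w : Fin k → Fin l → X,
          (cycCount p w : ℝ) * (((d : ℝ)⁻¹) *
            Real.logb 2 ((cycCount p w : ℝ) / ((m : ℝ) * n))) := by
    rw [hRval, Real.logb, Real.log_prod (fun w _ => hfac_ne w), Finset.sum_div]
    refine Finset.sum_congr rfl fun w _ => ?_
    rcases Nat.eq_zero_or_pos (cycCount p w) with hw | hw
    · rw [hw]; simp
    · have hcpos : 0 < (P w).toReal := by
        rw [hcw w]
        have hcc : (0 : ℝ) < (cycCount p w : ℝ) := by exact_mod_cast hw
        exact div_pos hcc hmnR
      rw [Real.log_pow, Real.log_rpow hcpos, hcw w, Real.logb]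
      ring
  refine le_of_eq ?_
  have hmn : ((m : ℝ) * n) ≠ 0 := hmnR.ne'
  have hkl : ((k : ℝ) * l) ≠ 0 := hklR.ne'
  have hdR : ((d : ℝ)) = (k : ℝ) * l := by rw [hd]; push_cast; ring
  have hEq : (∑ w : Fin k → Fin l → X,
        (cycCount p w : ℝ) * (((d : ℝ)⁻¹) *
          Real.logb 2 ((cycCount p w : ℝ) / ((m : ℝ) * n))))
      = ((m : ℝ) * n / ((k : ℝ) * l)) * ∑ w : Fin k → Fin l → X,
          ((cycCount p w : ℝ) / ((m : ℝ) * n)) *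
            Real.logb 2 ((cycCount p w : ℝ) / ((m : ℝ) * n)) := by
    rw [Finset.mul_sum]
    refine Finset.sum_congr rfl fun w _ => ?_
    rw [hdR]
    field_simp
    rw [eq_div_iff hmn]
    ring
  rw [Real.logb_inv, hlogρ, hEq, ← neg_mul]
end

section
/- Let X^{[m,n]} be a sequence of random m×n blocks and K = K(m), L = L(n) with K²,L² = o(min(m,n)) and K,L → ∞. Then the normalized empirical (K×L)-block entropy of the cyclic counts converges to the sup-entropy rate: limsup_{m,n→∞} −(1/(KL)) Σ_{w∈X^{K×L}} E[N(w|X^{[m,n]})/(mn)] log₂ E[N(w|X^{[m,n]})/(mn)] = limsup_{m,n→∞} H(X^{[m,n]})/(mn), provided E[N(w|X^{[m,n]})/(mn)] → P_{X^{[K,L]}}(w) appropriately (the stationary marginal case). -/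
open Finset Filter MeasureTheory

/-- Shannon entropy (in bits) of a PMF on a finite type. -/
noncomputable def pmfEntropy {α : Type*} [Fintype α] (μ : PMF α) : ℝ :=
  -∑ a : α, (μ a).toReal * Real.logb 2 (μ a).toReal

/-- Expectation of `f` with respect to a PMF on a finite type. -/
noncomputable def pmfExp {α : Type*} [Fintype α] (μ : PMF α) (f : α → ℝ) : ℝ :=
  ∑ a : α, (μ a).toReal * f a

noncomputable def ent {α : Type*} [Fintype α] (p : α → ℝ) : ℝ := ∑ a, Real.negMulLog (p a)

lemma ent_nonneg {α : Type*} [Fintype α] {p : α → ℝ} (h0 : ∀ a, 0 ≤ p a)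
    (h1 : ∀ a, p a ≤ 1) : 0 ≤ ent p :=
  Finset.sum_nonneg fun a _ => Real.negMulLog_nonneg (h0 a) (h1 a)

lemma gibbs {α : Type*} [Fintype α] {p q : α → ℝ} (hp0 : ∀ a, 0 ≤ p a) (hq0 : ∀ a, 0 ≤ q a)
    (hp1 : ∑ a, p a = 1) (hq1 : ∑ a, q a ≤ 1) (hac : ∀ a, p a ≠ 0 → q a ≠ 0) :
    ent p ≤ -∑ a, p a * Real.log (q a) := by
  have key : ∀ a, p a * Real.log (q a) - p a * Real.log (p a) ≤ q a - p a := by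
    intro a
    rcases eq_or_lt_of_le (hp0 a) with h | h
    · simp [← h]; exact hq0 a
    · have hq : 0 < q a := lt_of_le_of_ne (hq0 a) (Ne.symm (hac a h.ne'))
      have hlog : Real.log (q a / p a) ≤ q a / p a - 1 :=
        Real.log_le_sub_one_of_pos (div_pos hq h)
      have := mul_le_mul_of_nonneg_left hlog (le_of_lt h)
      rw [Real.log_div hq.ne' h.ne'] at this
      calc p a * Real.log (q a) - p a * Real.log (p a)
          = p a * (Real.log (q a) - Real.log (p a)) := by ring
        _ ≤ p a * (q a / p a - 1) := this
        _ = q a - p a := by field_simp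
  have hsum := Finset.sum_le_sum (fun a (_ : a ∈ Finset.univ) => key a)
  rw [Finset.sum_sub_distrib, Finset.sum_sub_distrib] at hsum
  have : (∑ a, p a * Real.log (q a)) - ∑ a, p a * Real.log (p a) ≤ 0 := by
    rw [hp1] at hsum; linarith
  have hent : ent p = -∑ a, p a * Real.log (p a) := by
    unfold ent; rw [← Finset.sum_neg_distrib]; congr 1; ext a; simp [Real.negMulLog]
  rw [hent]; linarith

lemma ent_le_log_card {α : Type*} [Fintype α] {p : α → ℝ} (hp0 : ∀ a, 0 ≤ p a)
    (hp1 : ∑ a, p a = 1) : ent p ≤ Real.log (Fintype.card α) := by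
  have hne : Nonempty α := by
    by_contra h
    rw [not_nonempty_iff] at h
    rw [Finset.sum_eq_zero (fun a _ => (h.false a).elim)] at hp1; norm_num at hp1
  have hcard : (0:ℝ) < (Fintype.card α : ℝ) := by
    exact_mod_cast Fintype.card_pos
  have := gibbs (q := fun _ => (Fintype.card α : ℝ)⁻¹) hp0 (fun _ => by positivity) hp1
    (le_of_eq (by rw [Finset.sum_const, Finset.card_univ, nsmul_eq_mul, mul_inv_cancel₀ hcard.ne']))
    (fun a _ => by positivity)
  calc ent p ≤ -∑ a, p a * Real.log (Fintype.card α : ℝ)⁻¹ := this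
    _ = Real.log (Fintype.card α) := by
        rw [← Finset.sum_mul, hp1, one_mul, Real.log_inv]; ring


/-- pushforward of a mass vector -/
noncomputable def push {α β : Type*} [Fintype α] [DecidableEq β] (f : α → β) (p : α → ℝ) :
    β → ℝ := fun b => ∑ a, if f a = b then p a else 0

lemma push_nonneg {α β : Type*} [Fintype α] [DecidableEq β] {f : α → β} {p : α → ℝ}
    (h0 : ∀ a, 0 ≤ p a) (b : β) : 0 ≤ push f p b :=
  Finset.sum_nonneg fun a _ => by split <;> simp [h0 a]

lemma sum_push {α β : Type*} [Fintype α] [Fintype β] [DecidableEq β] (f : α → β) (p : α → ℝ) :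
    ∑ b, push f p b = ∑ a, p a := by
  unfold push
  rw [Finset.sum_comm]
  exact Finset.sum_congr rfl fun a _ => by rw [Finset.sum_ite_eq Finset.univ (f a) (fun _ => p a)]; simp

lemma push_comp {α β γ : Type*} [Fintype α] [Fintype β] [DecidableEq β] [DecidableEq γ]
    (f : α → β) (g : β → γ) (p : α → ℝ) : push (fun a => g (f a)) p = push g (push f p) := by
  funext c
  unfold push
  have hb : ∀ b : β, (if g b = c then ∑ a, if f a = b then p a else 0 else 0)
      = ∑ a, if f a = b then (if g b = c then p a else 0) else 0 := by
    intro b; split <;> simp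
  simp_rw [hb]
  rw [Finset.sum_comm]
  refine Finset.sum_congr rfl fun a _ => ?_
  rw [Finset.sum_ite_eq Finset.univ (f a) (fun b => if g b = c then p a else 0)]
  simp

lemma ent_push_of_injective {α β : Type*} [Fintype α] [Fintype β] [DecidableEq β]
    {f : α → β} (hf : Function.Injective f) (p : α → ℝ) : ent (push f p) = ent p := by
  classical
  have h1 : ∀ a, push f p (f a) = p a := by
    intro a
    unfold push
    have : ∀ a' : α, (if f a' = f a then p a' else 0) = if a' = a then p a' else 0 := by
      intro a'; simp [hf.eq_iff]
    simp_rw [this]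
    simp
  have h2 : ∀ b, b ∉ Finset.univ.image f → push f p b = 0 := by
    intro b hb
    refine Finset.sum_eq_zero fun a _ => ?_
    simp only [Finset.mem_image, Finset.mem_univ, true_and] at hb
    simp only [ite_eq_right_iff]
    intro h; exact (hb ⟨a, h⟩).elim
  unfold ent
  calc (∑ b, Real.negMulLog (push f p b))
      = ∑ b ∈ Finset.univ.image f, Real.negMulLog (push f p b) :=
        (Finset.sum_subset (Finset.subset_univ _)
          (fun b _ hb => by rw [h2 b hb, Real.negMulLog_zero])).symm
    _ = ∑ a, Real.negMulLog (push f p (f a)) :=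
        Finset.sum_image (fun a _ a' _ h => hf h)
    _ = ∑ a, Real.negMulLog (p a) := Finset.sum_congr rfl fun a _ => by rw [h1]

/-- marginal of a pushforward along a pairing -/
lemma push_pair_fst {α β γ : Type*} [Fintype α] [Fintype β] [Fintype γ] [DecidableEq β]
    [DecidableEq γ] (f : α → β) (g : α → γ) (p : α → ℝ) (x : β) :
    ∑ y, push (fun a => (f a, g a)) p (x, y) = push f p x := by
  unfold push
  rw [Finset.sum_comm]
  refine Finset.sum_congr rfl fun a _ => ?_
  by_cases h : f a = x
  · have : ∀ y : γ, (if (f a, g a) = (x, y) then p a else 0) = if g a = y then p a else 0 := by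
      intro y; simp [Prod.ext_iff, h]
    simp_rw [this]
    rw [Finset.sum_ite_eq Finset.univ (g a) (fun _ => p a)]; simp [h]
  · have : ∀ y : γ, (if (f a, g a) = (x, y) then p a else 0) = 0 := by
      intro y; simp [Prod.ext_iff, h]
    simp_rw [this]
    simp [h]

lemma push_pair_snd {α β γ : Type*} [Fintype α] [Fintype β] [Fintype γ] [DecidableEq β]
    [DecidableEq γ] (f : α → β) (g : α → γ) (p : α → ℝ) (y : γ) :
    ∑ x, push (fun a => (f a, g a)) p (x, y) = push g p y := by
  unfold push
  rw [Finset.sum_comm]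
  refine Finset.sum_congr rfl fun a _ => ?_
  by_cases h : g a = y
  · have : ∀ x : β, (if (f a, g a) = (x, y) then p a else 0) = if f a = x then p a else 0 := by
      intro x; simp [Prod.ext_iff, h]
    simp_rw [this]
    rw [Finset.sum_ite_eq Finset.univ (f a) (fun _ => p a)]; simp [h]
  · have : ∀ x : β, (if (f a, g a) = (x, y) then p a else 0) = 0 := by
      intro x; simp [Prod.ext_iff, h]
    simp_rw [this]
    simp [h]

lemma ent_prod_le {β γ : Type*} [Fintype β] [Fintype γ] {p : β × γ → ℝ}
    (hp0 : ∀ a, 0 ≤ p a) (hp1 : ∑ a, p a = 1) :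
    ent p ≤ ent (fun x => ∑ y, p (x, y)) + ent (fun y => ∑ x, p (x, y)) := by
  set pb : β → ℝ := fun x => ∑ y, p (x, y) with hpb
  set pg : γ → ℝ := fun y => ∑ x, p (x, y) with hpg
  have hpb0 : ∀ x, 0 ≤ pb x := fun x => Finset.sum_nonneg fun y _ => hp0 _
  have hpg0 : ∀ y, 0 ≤ pg y := fun y => Finset.sum_nonneg fun x _ => hp0 _
  have hple_b : ∀ x y, p (x, y) ≤ pb x := fun x y =>
    Finset.single_le_sum (fun y _ => hp0 (x, y)) (Finset.mem_univ y)
  have hple_g : ∀ x y, p (x, y) ≤ pg y := fun x y =>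
    Finset.single_le_sum (f := fun x => p (x, y)) (fun x _ => hp0 (x, y)) (Finset.mem_univ x)
  have hsum_b : ∑ x, pb x = 1 := by rw [← hp1, Fintype.sum_prod_type]
  have hsum_g : ∑ y, pg y = 1 := by rw [← hp1, Fintype.sum_prod_type_right]
  have hgibbs := gibbs (p := p) (q := fun a => pb a.1 * pg a.2) hp0
    (fun a => mul_nonneg (hpb0 _) (hpg0 _)) hp1
    (le_of_eq (by
        rw [Fintype.sum_prod_type]
        have : ∀ x, ∑ y, pb x * pg y = pb x * ∑ y, pg y := fun x => (Finset.mul_sum ..).symm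
        simp_rw [this, hsum_g, mul_one, hsum_b]))
    (fun a ha => by
      have h1 : 0 < p a := lt_of_le_of_ne (hp0 a) (Ne.symm ha)
      have : 0 < pb a.1 := lt_of_lt_of_le h1 (hple_b a.1 a.2)
      have : 0 < pg a.2 := lt_of_lt_of_le h1 (hple_g a.1 a.2)
      positivity)
  refine hgibbs.trans (le_of_eq ?_)
  have key : ∀ a : β × γ, p a * Real.log (pb a.1 * pg a.2)
      = p a * Real.log (pb a.1) + p a * Real.log (pg a.2) := by
    intro a
    rcases eq_or_lt_of_le (hp0 a) with h | h
    · simp [← h]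
    · have h1 : 0 < pb a.1 := lt_of_lt_of_le h (hple_b a.1 a.2)
      have h2 : 0 < pg a.2 := lt_of_lt_of_le h (hple_g a.1 a.2)
      rw [Real.log_mul h1.ne' h2.ne']; ring
  simp_rw [key]
  rw [Finset.sum_add_distrib, neg_add]
  have e1 : ∑ a : β × γ, p a * Real.log (pb a.1) = ∑ x, pb x * Real.log (pb x) := by
    rw [Fintype.sum_prod_type]
    refine Finset.sum_congr rfl fun x _ => ?_
    show ∑ y, p (x, y) * Real.log (pb x) = _
    rw [← Finset.sum_mul]
  have e2 : ∑ a : β × γ, p a * Real.log (pg a.2) = ∑ y, pg y * Real.log (pg y) := by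
    rw [Fintype.sum_prod_type_right]
    refine Finset.sum_congr rfl fun y _ => ?_
    show ∑ x, p (x, y) * Real.log (pg y) = _
    rw [← Finset.sum_mul]
  rw [e1, e2]
  unfold ent
  simp [Real.negMulLog, Finset.sum_neg_distrib]

lemma ent_push_pair_le {α β γ : Type*} [Fintype α] [Fintype β] [Fintype γ] [DecidableEq β]
    [DecidableEq γ] (f : α → β) (g : α → γ) {p : α → ℝ}
    (hp0 : ∀ a, 0 ≤ p a) (hp1 : ∑ a, p a = 1) :
    ent (push (fun a => (f a, g a)) p) ≤ ent (push f p) + ent (push g p) := by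
  have h := ent_prod_le (p := push (fun a => (f a, g a)) p)
    (push_nonneg hp0) (by rw [sum_push]; exact hp1)
  have e1 : (fun x => ∑ y, push (fun a => (f a, g a)) p (x, y)) = push f p :=
    funext fun x => push_pair_fst f g p x
  have e2 : (fun y => ∑ x, push (fun a => (f a, g a)) p (x, y)) = push g p :=
    funext fun y => push_pair_snd f g p y
  rwa [e1, e2] at h

lemma ent_push_joint_le {α ι β : Type*} [Fintype α] [Fintype ι] [DecidableEq ι] [Fintype β]
    [DecidableEq β] (F : ι → α → β) {p : α → ℝ} (hp0 : ∀ a, 0 ≤ p a) (hp1 : ∑ a, p a = 1)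
    (s : Finset ι) :
    ent (push (fun a => (fun i : {i // i ∈ s} => F i a)) p) ≤ ∑ i ∈ s, ent (push (F i) p) := by
  classical
  induction s using Finset.cons_induction with
  | empty =>
    haveI : IsEmpty {i // i ∈ (∅ : Finset ι)} := ⟨fun i => (Finset.notMem_empty _ i.2)⟩
    have hd : ∀ a, (fun i : {i // i ∈ (∅ : Finset ι)} => F i a) = default :=
      fun a => Unique.eq_default _
    rw [Finset.sum_empty]
    have : ent (push (fun a => (fun i : {i // i ∈ (∅ : Finset ι)} => F i a)) p) = 0 := by
      unfold ent push
      rw [Fintype.sum_unique]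
      simp_rw [hd]
      simp [hp1]
    rw [this]
  | cons i s hi IH =>
    set e : β × ({j // j ∈ s} → β) → ({j // j ∈ Finset.cons i s hi} → β) :=
      fun x j => if hj : (j : ι) = i then x.1
        else x.2 ⟨j, by have := j.2; rw [Finset.mem_cons] at this; tauto⟩ with he
    have einj : Function.Injective e := by
      rintro ⟨x, h⟩ ⟨x', h'⟩ heq
      have h1 := congrFun heq ⟨i, Finset.mem_cons_self i s⟩
      simp only [he, dif_pos] at h1
      have h2 : h = h' := by
        funext j
        have := congrFun heq ⟨j, Finset.mem_cons_of_mem j.2⟩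
        have hne : (j : ι) ≠ i := fun hc => hi (hc ▸ j.2)
        simpa only [he, dif_neg hne] using this
      simp [h1, h2]
    have hcomp : (fun a => (fun j : {j // j ∈ Finset.cons i s hi} => F j a))
        = fun a => e (F i a, fun j : {j // j ∈ s} => F j a) := by
      funext a j
      by_cases hj : (j : ι) = i
      · simp only [he, dif_pos hj, hj]
      · simp only [he, dif_neg hj]
    calc ent (push (fun a => (fun j : {j // j ∈ Finset.cons i s hi} => F j a)) p)
        = ent (push e (push (fun a => (F i a, fun j : {j // j ∈ s} => F j a)) p)) := by
          rw [hcomp, push_comp]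
      _ = ent (push (fun a => (F i a, fun j : {j // j ∈ s} => F j a)) p) :=
          ent_push_of_injective einj _
      _ ≤ ent (push (F i) p) + ent (push (fun a => fun j : {j // j ∈ s} => F j a) p) :=
          ent_push_pair_le _ _ hp0 hp1
      _ ≤ ent (push (F i) p) + ∑ j ∈ s, ent (push (F j) p) := add_le_add_right IH _
      _ = ∑ j ∈ Finset.cons i s hi, ent (push (F j) p) := by rw [Finset.sum_cons]

lemma ent_le_sum_push {α ι β γ : Type*} [Fintype α] [Fintype ι] [DecidableEq ι] [Fintype β]
    [DecidableEq β] [Fintype γ] [DecidableEq γ] (F : ι → α → β) (G : α → γ) {p : α → ℝ}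
    (hp0 : ∀ a, 0 ≤ p a) (hp1 : ∑ a, p a = 1)
    (hinj : Function.Injective (fun a => ((fun i => F i a), G a))) :
    ent p ≤ (∑ i, ent (push (F i) p)) + Real.log (Fintype.card γ) := by
  have h0 : Function.Injective
      (fun a => ((fun i : {i // i ∈ (Finset.univ : Finset ι)} => F i a), G a)) := by
    intro a a' h
    apply hinj
    have h1 := congrArg Prod.fst h
    have h2 := congrArg Prod.snd h
    simp only at h1 h2
    refine Prod.ext ?_ h2
    funext i
    exact congrFun h1 ⟨i, Finset.mem_univ i⟩
  calc ent p
      = ent (push (fun a => ((fun i : {i // i ∈ (Finset.univ : Finset ι)} => F i a), G a)) p) :=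
        (ent_push_of_injective h0 p).symm
    _ ≤ ent (push (fun a => fun i : {i // i ∈ (Finset.univ : Finset ι)} => F i a) p)
          + ent (push G p) := ent_push_pair_le _ _ hp0 hp1
    _ ≤ (∑ i ∈ Finset.univ, ent (push (F i) p)) + ent (push G p) :=
        add_le_add_left (ent_push_joint_le F hp0 hp1 Finset.univ) _
    _ ≤ _ := add_le_add_right (ent_le_log_card (push_nonneg hp0) (by rw [sum_push]; exact hp1)) _

lemma arith1 {m s x : ℕ} (hs : s < m) (hx : x < m) : (s + (x + m - s) % m) % m = x := by
  rcases lt_or_ge x s with h | h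
  · rw [Nat.mod_eq_of_lt (show x + m - s < m by omega),
      show s + (x + m - s) = x + m by omega, Nat.add_mod_right, Nat.mod_eq_of_lt hx]
  · rw [show x + m - s = (x - s) + m by omega, Nat.add_mod_right,
      Nat.mod_eq_of_lt (show x - s < m by omega), show s + (x - s) = x by omega,
      Nat.mod_eq_of_lt hx]

lemma arith2 {m s x : ℕ} (hs : s < m) (hx : x < m) : ((x + m - s) % m + s) % m = x := by
  rcases lt_or_ge x s with h | h
  · rw [Nat.mod_eq_of_lt (show x + m - s < m by omega),
      show x + m - s + s = x + m by omega, Nat.add_mod_right, Nat.mod_eq_of_lt hx]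
  · rw [show x + m - s = (x - s) + m by omega, Nat.add_mod_right,
      Nat.mod_eq_of_lt (show x - s < m by omega), show x - s + s = x by omega,
      Nat.mod_eq_of_lt hx]

lemma arith3 {m s y : ℕ} (hs : s < m) (hy : y < m) : ((y + s) % m + m - s) % m = y := by
  rcases lt_or_ge (y + s) m with h | h
  · rw [Nat.mod_eq_of_lt h, show y + s + m - s = y + m by omega, Nat.add_mod_right,
      Nat.mod_eq_of_lt hy]
  · have h2 : (y + s) % m = y + s - m := by
      rw [Nat.mod_eq_sub_mod h]
      exact Nat.mod_eq_of_lt (by omega)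
    rw [h2, show y + s - m + m - s = y by omega, Nat.mod_eq_of_lt hy]

lemma card_val_lt {m R : ℕ} (hR : R ≤ m) :
    (Finset.univ.filter fun y : Fin m => (y : ℕ) < R).card = R := by
  have : (Finset.univ.filter fun y : Fin m => (y : ℕ) < R)
      = (Finset.range R).attachFin (fun v hv => lt_of_lt_of_le (Finset.mem_range.mp hv) hR) := by
    ext y
    simp [Finset.mem_attachFin, Finset.mem_range, Finset.mem_filter]
  rw [this, Finset.card_attachFin, Finset.card_range]

lemma card_rel {m R s : ℕ} (hm : 0 < m) (hs : s < m) (hR : R ≤ m) :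
    (Finset.univ.filter fun x : Fin m => ((x : ℕ) + m - s) % m < R).card = R := by
  have h : (Finset.univ.filter fun x : Fin m => ((x : ℕ) + m - s) % m < R).card
      = (Finset.univ.filter fun y : Fin m => (y : ℕ) < R).card := by
    refine Finset.card_bij' (fun x _ => (⟨((x : ℕ) + m - s) % m, Nat.mod_lt _ hm⟩ : Fin m))
      (fun y _ => (⟨((y : ℕ) + s) % m, Nat.mod_lt _ hm⟩ : Fin m)) ?_ ?_ ?_ ?_
    · intro x hx
      simp only [Finset.mem_filter, Finset.mem_univ, true_and] at hx ⊢
      exact hx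
    · intro y hy
      simp only [Finset.mem_filter, Finset.mem_univ, true_and] at hy ⊢
      rw [arith3 hs y.isLt]
      exact hy
    · intro x hx
      apply Fin.ext
      show ((((x : ℕ) + m - s) % m) + s) % m = (x : ℕ)
      exact arith2 hs x.isLt
    · intro y hy
      apply Fin.ext
      show (((y : ℕ) + s) % m + m - s) % m = (y : ℕ)
      exact arith3 hs y.isLt
  rw [h, card_val_lt hR]

section Concrete
variable {X : Type*} [Fintype X] [DecidableEq X]

/-- cyclic window read map -/
def win (m n Kk Ll : ℕ) (hm : 0 < m) (hn : 0 < n) (i j : ℕ) (q : Fin m → Fin n → X) :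
    Fin Kk → Fin Ll → X :=
  fun a b => q ⟨(i + (a : ℕ)) % m, Nat.mod_lt _ hm⟩ ⟨(j + (b : ℕ)) % n, Nat.mod_lt _ hn⟩

lemma step1 {m n Kk Ll : ℕ} (hm : 0 < m) (hn : 0 < n) (hK : 0 < Kk) (hL : 0 < Ll)
    {p : (Fin m → Fin n → X) → ℝ} (hp0 : ∀ q, 0 ≤ p q) (hp1 : ∑ q, p q = 1)
    (s t : ℕ) (hs : s < m) (ht : t < n) :
    ent p ≤ (∑ cd : Fin (m/Kk) × Fin (n/Ll),
        ent (push (win m n Kk Ll hm hn ((s + (cd.1 : ℕ)*Kk) % m) ((t + (cd.2 : ℕ)*Ll) % n)) p))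
      + ((m*n - (m/Kk*Kk)*(n/Ll*Ll)) : ℕ) * Real.log (Fintype.card X) := by
  classical
  set Lset : Finset (Fin m × Fin n) :=
    Finset.univ.filter (fun z : Fin m × Fin n =>
      ¬(((z.1 : ℕ) + m - s) % m < m/Kk*Kk ∧ ((z.2 : ℕ) + n - t) % n < n/Ll*Ll)) with hLset
  set F : Fin (m/Kk) × Fin (n/Ll) → (Fin m → Fin n → X) → (Fin Kk → Fin Ll → X) :=
    fun cd => win m n Kk Ll hm hn ((s + (cd.1 : ℕ)*Kk) % m) ((t + (cd.2 : ℕ)*Ll) % n) with hF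
  set G : (Fin m → Fin n → X) → ({z // z ∈ Lset} → X) := fun q z => q z.1.1 z.1.2 with hG
  have hinj : Function.Injective (fun q => ((fun cd => F cd q), G q)) := by
    intro q q' h
    have h1 : ∀ cd, F cd q = F cd q' := fun cd => congrFun (congrArg Prod.fst h) cd
    have h2 : G q = G q' := congrArg Prod.snd h
    funext x y
    by_cases hxy : ((x : ℕ) + m - s) % m < m/Kk*Kk ∧ ((y : ℕ) + n - t) % n < n/Ll*Ll
    · obtain ⟨hx, hy⟩ := hxy
      set r1 := ((x : ℕ) + m - s) % m with hr1
      set r2 := ((y : ℕ) + n - t) % n with hr2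
      have hc : r1 / Kk < m / Kk := Nat.div_lt_of_lt_mul (by rwa [Nat.mul_comm])
      have hd : r2 / Ll < n / Ll := Nat.div_lt_of_lt_mul (by rwa [Nat.mul_comm])
      have key := congrFun (congrFun (h1 (⟨r1/Kk, hc⟩, ⟨r2/Ll, hd⟩))
        ⟨r1 % Kk, Nat.mod_lt _ hK⟩) ⟨r2 % Ll, Nat.mod_lt _ hL⟩
      simp only [hF, win] at key
      have ex : (((s + r1/Kk*Kk) % m + r1 % Kk) % m) = (x : ℕ) := by
        rw [Nat.mod_add_mod, Nat.add_assoc, Nat.div_add_mod' r1 Kk]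
        exact arith1 hs x.isLt
      have ey : (((t + r2/Ll*Ll) % n + r2 % Ll) % n) = (y : ℕ) := by
        rw [Nat.mod_add_mod, Nat.add_assoc, Nat.div_add_mod' r2 Ll]
        exact arith1 ht y.isLt
      have e1 : x = (⟨((s + r1/Kk*Kk) % m + r1 % Kk) % m, Nat.mod_lt _ hm⟩ : Fin m) :=
        Fin.ext ex.symm
      have e2 : y = (⟨((t + r2/Ll*Ll) % n + r2 % Ll) % n, Nat.mod_lt _ hn⟩ : Fin n) :=
        Fin.ext ey.symm
      rw [e1, e2]
      exact key
    · have hz : (x, y) ∈ Lset := by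
        rw [hLset, Finset.mem_filter]
        exact ⟨Finset.mem_univ _, hxy⟩
      exact congrFun h2 ⟨(x, y), hz⟩
  refine (ent_le_sum_push F G hp0 hp1 hinj).trans (le_of_eq ?_)
  congr 1
  have hcard : Fintype.card ({z // z ∈ Lset} → X) = Fintype.card X ^ Lset.card := by
    rw [Fintype.card_fun, Fintype.card_coe]
  have hLcard : Lset.card = m*n - (m/Kk*Kk)*(n/Ll*Ll) := by
    have htot := Finset.card_filter_add_card_filter_not
      (s := (Finset.univ : Finset (Fin m × Fin n)))
      (p := fun z : Fin m × Fin n =>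
        ((z.1 : ℕ) + m - s) % m < m/Kk*Kk ∧ ((z.2 : ℕ) + n - t) % n < n/Ll*Ll)
    have hgood : (Finset.univ.filter (fun z : Fin m × Fin n =>
        ((z.1 : ℕ) + m - s) % m < m/Kk*Kk ∧ ((z.2 : ℕ) + n - t) % n < n/Ll*Ll)).card
        = (m/Kk*Kk)*(n/Ll*Ll) := by
      have hsplit : (Finset.univ.filter (fun z : Fin m × Fin n =>
          ((z.1 : ℕ) + m - s) % m < m/Kk*Kk ∧ ((z.2 : ℕ) + n - t) % n < n/Ll*Ll))
          = (Finset.univ.filter (fun x : Fin m => ((x : ℕ) + m - s) % m < m/Kk*Kk))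
            ×ˢ (Finset.univ.filter (fun y : Fin n => ((y : ℕ) + n - t) % n < n/Ll*Ll)) := by
        ext z
        simp [Finset.mem_filter, Finset.mem_product]
      rw [hsplit, Finset.card_product,
        card_rel hm hs (Nat.div_mul_le_self m Kk), card_rel hn ht (Nat.div_mul_le_self n Ll)]
    rw [hgood, ← hLset, Finset.card_univ, Fintype.card_prod, Fintype.card_fin,
      Fintype.card_fin] at htot
    omega
  rw [hcard, hLcard, Nat.cast_pow, Real.log_pow]
end Concrete

section More
open Real

open Fin.NatCast in
lemma shift_sum {m : ℕ} (hm : 0 < m) (h : Fin m → ℝ) (x : ℕ) :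
    ∑ s : Fin m, h ⟨((s : ℕ) + x) % m, Nat.mod_lt _ hm⟩ = ∑ i, h i := by
  haveI : NeZero m := ⟨hm.ne'⟩
  apply Fintype.sum_equiv (Equiv.addRight (x : Fin m))
  intro s
  congr 1
  apply Fin.ext
  show ((s : ℕ) + x) % m = ((s + (x : Fin m) : Fin m) : ℕ)
  rw [Fin.add_def, Fin.val_natCast]
  conv_lhs => rw [Nat.add_mod, Nat.mod_eq_of_lt s.isLt]

lemma sum_ent_le {ι α' : Type*} [Fintype ι] [Fintype α'] [Nonempty ι] (ν : ι → α' → ℝ)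
    (h0 : ∀ i w, 0 ≤ ν i w) :
    ∑ i, ent (ν i) ≤ (Fintype.card ι : ℝ) * ent (fun w => (∑ i, ν i w) / Fintype.card ι) := by
  have hM : (0:ℝ) < Fintype.card ι := by exact_mod_cast Fintype.card_pos
  unfold ent
  rw [Finset.mul_sum]
  rw [Finset.sum_comm]
  refine Finset.sum_le_sum fun w _ => ?_
  have jensen := Real.concaveOn_negMulLog.le_map_sum (t := Finset.univ)
    (w := fun _ : ι => (Fintype.card ι : ℝ)⁻¹) (p := fun i => ν i w)
    (fun i _ => by positivity)
    (by rw [Finset.sum_const, Finset.card_univ, nsmul_eq_mul, mul_inv_cancel₀ hM.ne'])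
    (fun i _ => Set.mem_Ici.mpr (h0 i w))
  simp only [smul_eq_mul] at jensen
  rw [← Finset.mul_sum, ← Finset.mul_sum] at jensen
  have h2 : (Fintype.card ι : ℝ)⁻¹ * ∑ i, ν i w = (∑ i, ν i w) / Fintype.card ι := by
    rw [div_eq_inv_mul]
  rw [h2] at jensen
  calc ∑ i, Real.negMulLog (ν i w)
      = (Fintype.card ι : ℝ) * ((Fintype.card ι : ℝ)⁻¹ * ∑ i, Real.negMulLog (ν i w)) := by
        field_simp
    _ ≤ (Fintype.card ι : ℝ) * Real.negMulLog ((∑ i, ν i w) / Fintype.card ι) := by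
        exact mul_le_mul_of_nonneg_left jensen (le_of_lt hM)

lemma pmf_sum_toReal {α : Type*} [Fintype α] (μ : PMF α) : ∑ a, (μ a).toReal = 1 := by
  have h := μ.tsum_coe
  rw [tsum_fintype] at h
  rw [← ENNReal.toReal_sum (fun a _ => PMF.apply_ne_top μ a), h, ENNReal.toReal_one]

lemma pmf_toReal_le_one {α : Type*} (μ : PMF α) (a : α) : (μ a).toReal ≤ 1 := by
  have := ENNReal.toReal_mono (by norm_num) (μ.coe_le_one a)
  simpa using this

lemma pmfEntropy_eq_ent {α : Type*} [Fintype α] (μ : PMF α) :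
    pmfEntropy μ = ent (fun a => (μ a).toReal) / Real.log 2 := by
  unfold pmfEntropy ent
  have h : ∀ x : ℝ, Real.negMulLog x / Real.log 2 = -(x * Real.logb 2 x) := by
    intro x; rw [Real.negMulLog, Real.logb]; ring
  rw [Finset.sum_div]
  simp_rw [h]
  rw [← Finset.sum_neg_distrib]

lemma pmfEntropy_nonneg {α : Type*} [Fintype α] (μ : PMF α) : 0 ≤ pmfEntropy μ := by
  rw [pmfEntropy_eq_ent]
  apply div_nonneg
  · exact ent_nonneg (fun a => ENNReal.toReal_nonneg) (fun a => pmf_toReal_le_one μ a)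
  · exact Real.log_nonneg (by norm_num)

lemma pmfEntropy_le_card {α : Type*} [Fintype α] (μ : PMF α) :
    pmfEntropy μ ≤ Real.logb 2 (Fintype.card α) := by
  rw [pmfEntropy_eq_ent, Real.logb]
  have h1 := ent_le_log_card (p := fun a => (μ a).toReal)
    (fun a => ENNReal.toReal_nonneg) (pmf_sum_toReal μ)
  have h2 : (0:ℝ) < Real.log 2 := Real.log_pos (by norm_num)
  gcongr
end More

lemma sum_push_win {X : Type*} [Fintype X] [DecidableEq X] {m n Kk Ll : ℕ}
    (hm : 0 < m) (hn : 0 < n) (p : (Fin m → Fin n → X) → ℝ) (w : Fin Kk → Fin Ll → X) :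
    ∑ ij : Fin m × Fin n, push (win m n Kk Ll hm hn (ij.1 : ℕ) (ij.2 : ℕ)) p w
      = ∑ q, p q * (cycCount q w : ℝ) := by
  unfold push
  rw [Finset.sum_comm]
  refine Finset.sum_congr rfl fun q _ => ?_
  unfold cycCount
  rw [Finset.card_filter]
  push_cast
  rw [Finset.mul_sum]
  refine Finset.sum_congr rfl fun ij _ => ?_
  split_ifs with h1 h2 h2
  · ring
  · exact absurd (fun a b => congrFun (congrFun h1 a) b) h2
  · exact absurd (funext fun a => funext fun b => h2 a b) h1
  · ring

lemma key {X : Type*} [Fintype X] [DecidableEq X] [Nonempty X] {m n Kk Ll : ℕ}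
    (hm : 0 < m) (hn : 0 < n) (hK : 0 < Kk) (hL : 0 < Ll) (hKm : Kk ≤ m) (hLn : Ll ≤ n)
    (μ1 : PMF (Fin m → Fin n → X)) (μ2 : PMF (Fin Kk → Fin Ll → X))
    (hmarg : ∀ w, (∑ q, (μ1 q).toReal * (cycCount q w : ℝ)) = ((m : ℝ) * n) * (μ2 w).toReal) :
    pmfEntropy μ1 / ((m : ℝ) * n) ≤ pmfEntropy μ2 / ((Kk : ℝ) * Ll)
      + ((Kk : ℝ)/m + (Ll : ℝ)/n) * Real.logb 2 (Fintype.card X) := by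
  classical
  set p : (Fin m → Fin n → X) → ℝ := fun q => (μ1 q).toReal with hp
  set r : (Fin Kk → Fin Ll → X) → ℝ := fun w => (μ2 w).toReal with hrdef
  have hp0 : ∀ q, 0 ≤ p q := fun q => ENNReal.toReal_nonneg
  have hp1 : ∑ q, p q = 1 := pmf_sum_toReal μ1
  have hr0 : ∀ w, 0 ≤ r w := fun w => ENNReal.toReal_nonneg
  have hr1le : ∀ w, r w ≤ 1 := fun w => pmf_toReal_le_one μ2 w
  have hmR : (0:ℝ) < m := by exact_mod_cast hm
  have hnR : (0:ℝ) < n := by exact_mod_cast hn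
  have hKR : (0:ℝ) < Kk := by exact_mod_cast hK
  have hLR : (0:ℝ) < Ll := by exact_mod_cast hL
  have hcardX : (1:ℝ) ≤ (Fintype.card X : ℝ) := by exact_mod_cast Fintype.card_pos
  have hlogX0 : 0 ≤ Real.log (Fintype.card X) := Real.log_nonneg hcardX
  have hbar : ∀ w, (∑ ij : Fin m × Fin n, push (win m n Kk Ll hm hn (ij.1 : ℕ) (ij.2 : ℕ)) p w)
      / ((m : ℝ) * n) = r w := by
    intro w
    rw [sum_push_win hm hn p w, hmarg w]
    field_simp
    rfl
  haveI : Nonempty (Fin m × Fin n) := ⟨(⟨0, hm⟩, ⟨0, hn⟩)⟩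
  -- Jensen
  have hjensen : (∑ ij : Fin m × Fin n,
      ent (push (win m n Kk Ll hm hn (ij.1 : ℕ) (ij.2 : ℕ)) p)) ≤ ((m : ℝ) * n) * ent r := by
    have hJ := sum_ent_le (ι := Fin m × Fin n)
      (fun ij => push (win m n Kk Ll hm hn (ij.1 : ℕ) (ij.2 : ℕ)) p)
      (fun ij w => push_nonneg hp0 w)
    have hcard : ((Fintype.card (Fin m × Fin n) : ℕ) : ℝ) = (m : ℝ) * n := by
      simp [Fintype.card_prod]
    rw [hcard] at hJ
    refine hJ.trans (le_of_eq ?_)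
    exact congrArg (fun z => ((m:ℝ)*n) * z) (congrArg ent (funext fun w => hbar w))
  -- averaged tiling bound
  have hsum := Finset.sum_le_sum (fun (st : Fin m × Fin n) (_ : st ∈ Finset.univ) =>
    step1 hm hn hK hL hp0 hp1 (st.1 : ℕ) (st.2 : ℕ) st.1.isLt st.2.isLt)
  rw [Finset.sum_const, Finset.card_univ, Fintype.card_prod, Fintype.card_fin, Fintype.card_fin,
    nsmul_eq_mul, Finset.sum_add_distrib, Finset.sum_const, Finset.card_univ, Fintype.card_prod,
    Fintype.card_fin, Fintype.card_fin, nsmul_eq_mul] at hsum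
  -- exchange sums
  have hinner : ∀ cd : Fin (m/Kk) × Fin (n/Ll),
      (∑ st : Fin m × Fin n, ent (push (win m n Kk Ll hm hn
          (((st.1:ℕ) + (cd.1:ℕ)*Kk) % m) (((st.2:ℕ) + (cd.2:ℕ)*Ll) % n)) p))
      = ∑ ij : Fin m × Fin n, ent (push (win m n Kk Ll hm hn (ij.1:ℕ) (ij.2:ℕ)) p) := by
    intro cd
    rw [Fintype.sum_prod_type, Fintype.sum_prod_type]
    have h1 : ∀ s : Fin m, (∑ t : Fin n, ent (push (win m n Kk Ll hm hn
        (((s:ℕ) + (cd.1:ℕ)*Kk) % m) (((t:ℕ) + (cd.2:ℕ)*Ll) % n)) p))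
        = ∑ j : Fin n, ent (push (win m n Kk Ll hm hn (((s:ℕ)+(cd.1:ℕ)*Kk)%m) (j:ℕ)) p) :=
      fun s => shift_sum hn
        (fun j : Fin n => ent (push (win m n Kk Ll hm hn (((s:ℕ)+(cd.1:ℕ)*Kk)%m) (j:ℕ)) p))
        ((cd.2:ℕ)*Ll)
    rw [Finset.sum_congr rfl (fun s _ => h1 s)]
    exact shift_sum hm
      (fun i : Fin m => ∑ j : Fin n, ent (push (win m n Kk Ll hm hn (i:ℕ) (j:ℕ)) p))
      ((cd.1:ℕ)*Kk)
  rw [Finset.sum_comm, Finset.sum_congr rfl (fun cd _ => hinner cd), Finset.sum_const,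
    Finset.card_univ, Fintype.card_prod, Fintype.card_fin, Fintype.card_fin,
    nsmul_eq_mul] at hsum
  -- hsum : ↑(m*n) * ent p ≤ ↑(m/Kk * (n/Ll)) * S + ↑(m*n) * (↑Left * log |X|)
  set S := ∑ ij : Fin m × Fin n, ent (push (win m n Kk Ll hm hn (ij.1:ℕ) (ij.2:ℕ)) p) with hS
  set Qm := m / Kk with hQm
  set Qn := n / Ll with hQn
  set Lft := m * n - Qm * Kk * (Qn * Ll) with hLft
  have hQ0 : (0:ℝ) ≤ (Qm : ℝ) * (Qn : ℝ) := by positivity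
  have h4 : ((m:ℝ) * n) * ent p ≤ ((Qm:ℝ) * Qn) * (((m:ℝ)*n) * ent r)
      + ((m:ℝ)*n) * ((Lft:ℝ) * Real.log (Fintype.card X)) := by
    push_cast at hsum
    nlinarith [mul_le_mul_of_nonneg_left hjensen hQ0]
  have hentr0 : 0 ≤ ent r := ent_nonneg hr0 hr1le
  have h5 : ent p ≤ ((Qm:ℝ) * Qn) * ent r + (Lft:ℝ) * Real.log (Fintype.card X) := by
    have e : ((Qm:ℝ) * Qn) * (((m:ℝ)*n) * ent r) + ((m:ℝ)*n) * ((Lft:ℝ) * Real.log (Fintype.card X))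
        = ((m:ℝ)*n) * (((Qm:ℝ) * Qn) * ent r + (Lft:ℝ) * Real.log (Fintype.card X)) := by ring
    rw [e] at h4
    exact le_of_mul_le_mul_left h4 (mul_pos hmR hnR)
  -- leftover bound
  have hma : Qm * Kk ≤ m := Nat.div_mul_le_self m Kk
  have hnb : Qn * Ll ≤ n := Nat.div_mul_le_self n Ll
  have hLftcast : (Lft : ℝ) = (m:ℝ)*n - ((Qm*Kk : ℕ):ℝ) * ((Qn*Ll : ℕ):ℝ) := by
    rw [hLft, Nat.cast_sub (Nat.mul_le_mul hma hnb)]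
    push_cast
    ring
  have hmodK : ((m:ℝ) - ((Qm*Kk : ℕ):ℝ)) ≤ (Kk:ℝ) := by
    have h2 : Qm * Kk + m % Kk = m := Nat.div_add_mod' m Kk
    have h3 : m % Kk < Kk := Nat.mod_lt m hK
    have h4 : ((Qm*Kk : ℕ):ℝ) + ((m % Kk : ℕ):ℝ) = (m:ℝ) := by exact_mod_cast congrArg (Nat.cast : ℕ → ℝ) h2
    have h5 : ((m % Kk : ℕ):ℝ) ≤ (Kk:ℝ) := by exact_mod_cast h3.le
    linarith
  have hmodL : ((n:ℝ) - ((Qn*Ll : ℕ):ℝ)) ≤ (Ll:ℝ) := by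
    have h2 : Qn * Ll + n % Ll = n := Nat.div_add_mod' n Ll
    have h3 : n % Ll < Ll := Nat.mod_lt n hL
    have h4 : ((Qn*Ll : ℕ):ℝ) + ((n % Ll : ℕ):ℝ) = (n:ℝ) := by exact_mod_cast congrArg (Nat.cast : ℕ → ℝ) h2
    have h5 : ((n % Ll : ℕ):ℝ) ≤ (Ll:ℝ) := by exact_mod_cast h3.le
    linarith
  have haR : ((Qm*Kk:ℕ):ℝ) ≤ (m:ℝ) := by exact_mod_cast hma
  have hbR : ((Qn*Ll:ℕ):ℝ) ≤ (n:ℝ) := by exact_mod_cast hnb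
  have ha0 : (0:ℝ) ≤ ((Qm*Kk:ℕ):ℝ) := Nat.cast_nonneg _
  have hb0 : (0:ℝ) ≤ ((Qn*Ll:ℕ):ℝ) := Nat.cast_nonneg _
  have hLeftle : (Lft:ℝ) ≤ (Kk:ℝ)*n + (Ll:ℝ)*m := by
    rw [hLftcast]
    have t1 : ((m:ℝ) - ((Qm*Kk:ℕ):ℝ))*n ≤ (Kk:ℝ)*n := mul_le_mul_of_nonneg_right hmodK hnR.le
    have t2 : ((Qm*Kk:ℕ):ℝ)*((n:ℝ) - ((Qn*Ll:ℕ):ℝ)) ≤ (m:ℝ)*(Ll:ℝ) :=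
      mul_le_mul haR hmodL (by linarith) (by linarith)
    nlinarith
  have hQle : ((Qm:ℝ)*(Qn:ℝ)) ≤ ((m:ℝ)*n)/((Kk:ℝ)*Ll) := by
    have q1 : (Qm:ℝ) ≤ (m:ℝ)/Kk := Nat.cast_div_le
    have q2 : (Qn:ℝ) ≤ (n:ℝ)/Ll := Nat.cast_div_le
    calc (Qm:ℝ)*(Qn:ℝ) ≤ ((m:ℝ)/Kk)*((n:ℝ)/Ll) :=
          mul_le_mul q1 q2 (Nat.cast_nonneg _) (by positivity)
      _ = ((m:ℝ)*n)/((Kk:ℝ)*Ll) := by rw [div_mul_div_comm]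
  have h6 : ent p ≤ ((m:ℝ)*n)/((Kk:ℝ)*Ll) * ent r
      + ((Kk:ℝ)*n + (Ll:ℝ)*m) * Real.log (Fintype.card X) :=
    h5.trans (add_le_add (mul_le_mul_of_nonneg_right hQle hentr0)
      (mul_le_mul_of_nonneg_right hLeftle hlogX0))
  have hmn : (0:ℝ) < (m:ℝ)*n := mul_pos hmR hnR
  have main : ent p / ((m:ℝ)*n) ≤ ent r / ((Kk:ℝ)*Ll)
      + ((Kk:ℝ)/m + (Ll:ℝ)/n) * Real.log (Fintype.card X) := by
    have e : (((m:ℝ)*n)/((Kk:ℝ)*Ll) * ent r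
        + ((Kk:ℝ)*n + (Ll:ℝ)*m) * Real.log (Fintype.card X)) / ((m:ℝ)*n)
        = ent r / ((Kk:ℝ)*Ll) + ((Kk:ℝ)/m + (Ll:ℝ)/n) * Real.log (Fintype.card X) := by
      field_simp
    rw [← e]
    exact div_le_div_of_nonneg_right h6 hmn.le
  have hlog2 : (0:ℝ) < Real.log 2 := Real.log_pos (by norm_num)
  calc pmfEntropy μ1 / ((m:ℝ)*n) = (ent p / ((m:ℝ)*n)) / Real.log 2 := by
        rw [pmfEntropy_eq_ent]; ring
    _ ≤ (ent r / ((Kk:ℝ)*Ll) + ((Kk:ℝ)/m + (Ll:ℝ)/n) * Real.log (Fintype.card X))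
        / Real.log 2 := by
        exact div_le_div_of_nonneg_right main hlog2.le
    _ = pmfEntropy μ2 / ((Kk:ℝ)*Ll) + ((Kk:ℝ)/m + (Ll:ℝ)/n) * Real.logb 2 (Fintype.card X) := by
        rw [pmfEntropy_eq_ent, Real.logb]; ring

lemma real_le_of_forall_pos_le_add {a b : ℝ} (h : ∀ ε : ℝ, 0 < ε → a ≤ b + ε) : a ≤ b := by
  by_contra hc
  push_neg at hc
  have := h ((a - b)/2) (by linarith)
  linarith
/-- the normalized expected empirical `(K × L)`-block entropy of the cyclic
counts converges (in `limsup`) to the sup-entropy rate, provided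
`E[N(w|X^{[m,n]})/(mn)]` equals the stationary marginal `P_{X^{[K,L]}}(w)`. -/
theorem limsup_empirical_entropy_eq_sup_entropy_rate
    {X : Type*} [Fintype X] [DecidableEq X] [Nonempty X]
    (μ : ∀ m n : ℕ, PMF (Fin m → Fin n → X)) (K L : ℕ → ℕ)
    (hK : Filter.Tendsto K Filter.atTop Filter.atTop)
    (hL : Filter.Tendsto L Filter.atTop Filter.atTop)
    (hKo : Filter.Tendsto (fun m : ℕ => ((K m : ℝ) ^ 2) / m) Filter.atTop (nhds 0))
    (hLo : Filter.Tendsto (fun n : ℕ => ((L n : ℝ) ^ 2) / n) Filter.atTop (nhds 0))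
    (hmarg : ∀ m n : ℕ, 1 ≤ m → 1 ≤ n → ∀ w : Fin (K m) → Fin (L n) → X,
      pmfExp (μ m n) (fun q => (cycCount q w : ℝ) / ((m : ℝ) * n)) =
        ((μ (K m) (L n)) w).toReal) :
    Filter.limsup (fun mn : ℕ × ℕ =>
        -(1 / ((K mn.1 : ℝ) * (L mn.2 : ℝ))) *
          ∑ w : Fin (K mn.1) → Fin (L mn.2) → X,
            pmfExp (μ mn.1 mn.2) (fun q => (cycCount q w : ℝ) / ((mn.1 : ℝ) * mn.2)) *
              Real.logb 2
                (pmfExp (μ mn.1 mn.2) (fun q => (cycCount q w : ℝ) / ((mn.1 : ℝ) * mn.2))))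
        (Filter.atTop ×ˢ Filter.atTop) =
    Filter.limsup (fun mn : ℕ × ℕ => pmfEntropy (μ mn.1 mn.2) / ((mn.1 : ℝ) * mn.2))
        (Filter.atTop ×ˢ Filter.atTop) := by  classical
  set F : Filter (ℕ × ℕ) := Filter.atTop ×ˢ Filter.atTop with hF
  set f : ℕ × ℕ → ℝ := fun mn => pmfEntropy (μ mn.1 mn.2) / ((mn.1 : ℝ) * mn.2) with hf
  set φ : ℕ × ℕ → ℕ × ℕ := fun mn => (K mn.1, L mn.2) with hφ
  set g : ℕ × ℕ → ℝ := fun mn => pmfEntropy (μ (K mn.1) (L mn.2)) / ((K mn.1 : ℝ) * (L mn.2 : ℝ))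
    with hg
  set C : ℝ := Real.logb 2 (Fintype.card X) with hC
  have hcardX : (1:ℝ) ≤ (Fintype.card X : ℝ) := by exact_mod_cast Fintype.card_pos
  have hC0 : 0 ≤ C := Real.logb_nonneg (by norm_num) hcardX
  have hf0 : ∀ mn, 0 ≤ f mn := fun mn => div_nonneg (pmfEntropy_nonneg _) (by positivity)
  have hfC : ∀ mn : ℕ × ℕ, f mn ≤ C := by
    intro mn
    rcases eq_or_ne ((mn.1 : ℝ) * mn.2) 0 with h | h
    · show pmfEntropy (μ mn.1 mn.2) / ((mn.1 : ℝ) * mn.2) ≤ C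
      rw [h, div_zero]; exact hC0
    · have hmn : (0:ℝ) < (mn.1:ℝ) * mn.2 := lt_of_le_of_ne (by positivity) (Ne.symm h)
      have hcard : ((Fintype.card (Fin mn.1 → Fin mn.2 → X) : ℕ) : ℝ)
          = ((Fintype.card X : ℝ)) ^ (mn.2 * mn.1) := by
        rw [Fintype.card_fun, Fintype.card_fun, Fintype.card_fin, Fintype.card_fin, ← pow_mul]
        push_cast
        ring
      have h1 : pmfEntropy (μ mn.1 mn.2) ≤ ((mn.2 * mn.1 : ℕ) : ℝ) * C := by
        refine (pmfEntropy_le_card _).trans (le_of_eq ?_)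
        rw [hcard, Real.logb_pow]
        try push_cast
        try ring
      show pmfEntropy (μ mn.1 mn.2) / ((mn.1 : ℝ) * mn.2) ≤ C
      rw [div_le_iff₀ hmn]
      refine h1.trans (le_of_eq ?_)
      push_cast
      ring
  haveI hFne : F.NeBot := by rw [hF]; infer_instance
  have hgC : ∀ mn : ℕ × ℕ, g mn ≤ C := fun mn => hfC (φ mn)
  have hg0 : ∀ mn, 0 ≤ g mn := fun mn => hf0 (φ mn)
  have hboundg : F.IsBoundedUnder (· ≤ ·) g := Filter.isBoundedUnder_of ⟨C, hgC⟩
  have hboundf : F.IsBoundedUnder (· ≤ ·) f := Filter.isBoundedUnder_of ⟨C, hfC⟩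
  have hcobf : F.IsCoboundedUnder (· ≤ ·) f :=
    Filter.IsBoundedUnder.isCoboundedUnder_le (Filter.isBoundedUnder_of ⟨0, hf0⟩)
  have hcobg : F.IsCoboundedUnder (· ≤ ·) g :=
    Filter.IsBoundedUnder.isCoboundedUnder_le (Filter.isBoundedUnder_of ⟨0, hg0⟩)
  -- Step A : LHS function eventually equals g
  have hevK1 : ∀ᶠ mn : ℕ × ℕ in F, 1 ≤ K mn.1 :=
    Filter.Eventually.prod_inl (hK.eventually (Filter.eventually_ge_atTop 1)) _
  have hevL1 : ∀ᶠ mn : ℕ × ℕ in F, 1 ≤ L mn.2 :=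
    Filter.Eventually.prod_inr (hL.eventually (Filter.eventually_ge_atTop 1)) _
  have hevm1 : ∀ᶠ mn : ℕ × ℕ in F, 1 ≤ mn.1 :=
    Filter.Eventually.prod_inl (Filter.eventually_ge_atTop 1) _
  have hevn1 : ∀ᶠ mn : ℕ × ℕ in F, 1 ≤ mn.2 :=
    Filter.Eventually.prod_inr (Filter.eventually_ge_atTop 1) _
  have hcongr : ∀ᶠ mn : ℕ × ℕ in F,
      (-(1 / ((K mn.1 : ℝ) * (L mn.2 : ℝ))) *
        ∑ w : Fin (K mn.1) → Fin (L mn.2) → X,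
          pmfExp (μ mn.1 mn.2) (fun q => (cycCount q w : ℝ) / ((mn.1 : ℝ) * mn.2)) *
            Real.logb 2
              (pmfExp (μ mn.1 mn.2) (fun q => (cycCount q w : ℝ) / ((mn.1 : ℝ) * mn.2))))
      = g mn := by
    filter_upwards [hevm1, hevn1] with mn hm1 hn1
    have hmg := hmarg mn.1 mn.2 hm1 hn1
    rw [Finset.sum_congr rfl (fun w _ => by rw [hmg w])]
    show _ = pmfEntropy (μ (K mn.1) (L mn.2)) / ((K mn.1 : ℝ) * (L mn.2 : ℝ))
    rw [pmfEntropy]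
    ring
  rw [Filter.limsup_congr hcongr]
  -- Step B : limsup g ≤ limsup f
  have hφt : Filter.Tendsto φ F F := by
    rw [hF, hφ]
    exact hK.prodMap hL
  have hgf : Filter.limsup g F = Filter.limsup f (Filter.map φ F) := by
    rw [Filter.limsup, Filter.limsup, Filter.map_map]
    rfl
  have hAB : Filter.limsup g F ≤ Filter.limsup f F := by
    rw [hgf]
    haveI : (Filter.map φ F).NeBot := hFne.map φ
    refine Filter.limsup_le_limsup_of_le hφt ?_ hboundf
    exact Filter.IsBoundedUnder.isCoboundedUnder_le (Filter.isBoundedUnder_of ⟨0, hf0⟩)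
  -- Step C : limsup f ≤ limsup g
  have hBA : Filter.limsup f F ≤ Filter.limsup g F := by
    apply real_le_of_forall_pos_le_add
    intro ε hε
    set δ : ℝ := min 1 (ε / (4 * (C + 1))) with hδ
    have hδ0 : 0 < δ := lt_min (by norm_num) (by positivity)
    have hevKsq : ∀ᶠ mn : ℕ × ℕ in F, ((K mn.1 : ℝ))^2 / mn.1 < δ :=
      Filter.Eventually.prod_inl (hKo.eventually_lt_const hδ0) _
    have hevLsq : ∀ᶠ mn : ℕ × ℕ in F, ((L mn.2 : ℝ))^2 / mn.2 < δ :=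
      Filter.Eventually.prod_inr (hLo.eventually_lt_const hδ0) _
    have hev1 : ∀ᶠ mn in F, g mn < Filter.limsup g F + ε/2 :=
      Filter.eventually_lt_of_limsup_lt (lt_add_of_pos_right _ (by linarith)) hboundg
    have hev2 : ∀ᶠ mn in F, f mn ≤ g mn + ε/2 := by
      filter_upwards [hevm1, hevn1, hevK1, hevL1, hevKsq, hevLsq]
        with mn hm1 hn1 hK1 hL1 hKsq hLsq
      obtain ⟨m, n⟩ := mn
      simp only at hm1 hn1 hK1 hL1 hKsq hLsq ⊢
      have hmR : (0:ℝ) < m := by exact_mod_cast hm1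
      have hnR : (0:ℝ) < n := by exact_mod_cast hn1
      have hKR : (1:ℝ) ≤ K m := by exact_mod_cast hK1
      have hLR : (1:ℝ) ≤ L n := by exact_mod_cast hL1
      have hKsq' : ((K m : ℝ))^2 < m := by
        have := lt_of_lt_of_le hKsq (min_le_left _ _)
        rw [div_lt_one hmR] at this
        exact this
      have hLsq' : ((L n : ℝ))^2 < n := by
        have := lt_of_lt_of_le hLsq (min_le_left _ _)
        rw [div_lt_one hnR] at this
        exact this
      have hKm : K m ≤ m := by
        have : (K m : ℝ) < m := lt_of_le_of_lt (by nlinarith) hKsq'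
        exact_mod_cast this.le
      have hLn : L n ≤ n := by
        have : (L n : ℝ) < n := lt_of_le_of_lt (by nlinarith) hLsq'
        exact_mod_cast this.le
      -- error bound
      have herr : ((K m : ℝ)/m + (L n : ℝ)/n) * C ≤ ε/2 := by
        have e1 : (K m : ℝ)/m ≤ ((K m : ℝ))^2/m := by
          apply div_le_div_of_nonneg_right ?_ hmR.le
          nlinarith
        have e2 : (L n : ℝ)/n ≤ ((L n : ℝ))^2/n := by
          apply div_le_div_of_nonneg_right ?_ hnR.le
          nlinarith
        have e3 : ((K m : ℝ))^2/m ≤ ε / (4 * (C + 1)) :=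
          (lt_of_lt_of_le hKsq (min_le_right _ _)).le
        have e4 : ((L n : ℝ))^2/n ≤ ε / (4 * (C + 1)) :=
          (lt_of_lt_of_le hLsq (min_le_right _ _)).le
        have e5 : (K m : ℝ)/m + (L n : ℝ)/n ≤ 2 * (ε / (4 * (C + 1))) := by linarith
        have e6 : 2 * (ε / (4 * (C + 1))) * (C + 1) = ε/2 := by
          field_simp
          ring
        calc ((K m : ℝ)/m + (L n : ℝ)/n) * C ≤ (2 * (ε / (4 * (C + 1)))) * (C + 1) := by
              apply mul_le_mul e5 (by linarith) hC0 (by positivity)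
          _ = ε/2 := e6
      -- apply the key inequality
      have hmarg' : ∀ w : Fin (K m) → Fin (L n) → X,
          (∑ q, ((μ m n) q).toReal * (cycCount q w : ℝ)) = ((m : ℝ) * n) * ((μ (K m) (L n)) w).toReal := by
        intro w
        have h := hmarg m n hm1 hn1 w
        rw [pmfExp] at h
        have h2 : ∀ q : Fin m → Fin n → X,
            ((μ m n) q).toReal * ((cycCount q w : ℝ) / ((m : ℝ) * n))
            = ((μ m n) q).toReal * (cycCount q w : ℝ) / ((m : ℝ) * n) := fun q => by ring
        rw [Finset.sum_congr rfl (fun q _ => h2 q), ← Finset.sum_div] at h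
        rw [div_eq_iff (by positivity)] at h
        rw [h]
        ring
      have hkey := key (Nat.lt_of_lt_of_le Nat.zero_lt_one hm1) (Nat.lt_of_lt_of_le Nat.zero_lt_one hn1)
        (Nat.lt_of_lt_of_le Nat.zero_lt_one hK1) (Nat.lt_of_lt_of_le Nat.zero_lt_one hL1)
        hKm hLn (μ m n) (μ (K m) (L n)) hmarg'
      calc pmfEntropy (μ m n) / ((m : ℝ) * n)
          ≤ pmfEntropy (μ (K m) (L n)) / ((K m : ℝ) * L n)
            + ((K m : ℝ)/m + (L n : ℝ)/n) * Real.logb 2 (Fintype.card X) := hkey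
        _ ≤ pmfEntropy (μ (K m) (L n)) / ((K m : ℝ) * L n) + ε/2 := by
            rw [← hC] at *
            linarith [herr]
    have hev : ∀ᶠ mn in F, f mn ≤ Filter.limsup g F + ε := by
      filter_upwards [hev1, hev2] with mn h1 h2
      linarith
    exact Filter.limsup_le_of_le hcobf hev
  exact le_antisymm hAB hBA
end
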